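/- For every d ≥ 2 and every k ≥ 1, there exists a directed graph D with minimum outdegree d and m = kd(2d−1) + d(2d+1) edges such that for some vertex v₀, every bipartition V = V1 ∪ V2 with v₀ ∈ V1 satisfies e(V1,V2) ≤ (d−1)/(2(2d−1))·m + d²/(2d−1). In particular, the optimal constant c_d in the judicious directed partition problem satisfies c_d ≤ (d−1)/(2(2d−1)). -/

import Mathlib

open Finset

/-- The number of directed edges from `X` to `Y`. -/
def eCount {V : Type} [DecidableEq V] (E : V → V → Prop) [DecidableRel E]
    (X Y : Finset V) : ℕ :=
  ((X ×ˢ Y).filter fun p => E p.1 p.2).card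

/-- Outdegree of `v`. -/
def outDeg {V : Type} [Fintype V] (E : V → V → Prop) [DecidableRel E] (v : V) : ℕ :=
  (Finset.univ.filter fun w => E v w).card

section Helpers

variable {α : Type} [DecidableEq α]

lemma eCount_eq_sum (E : α → α → Prop) [DecidableRel E] (X Y : Finset α) :
    eCount E X Y = ∑ x ∈ X, (Y.filter fun y => E x y).card := by
  unfold eCount
  rw [Finset.card_filter, Finset.sum_product]
  simp only [Finset.card_filter]

lemma eCount_swap (E : α → α → Prop) [DecidableRel E] (X Y : Finset α) :
    eCount E X Y = eCount (fun a b => E b a) Y X := by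
  unfold eCount
  apply Finset.card_nbij' (fun p => (p.2, p.1)) (fun p => (p.2, p.1)) <;>
    simp +contextual [Finset.mem_filter, Finset.mem_product, Set.MapsTo, Set.LeftInvOn, Set.RightInvOn]

end Helpers

section Helpers2

variable {α : Type} [DecidableEq α] [Fintype α]

lemma eCount_split_right (E : α → α → Prop) [DecidableRel E] (X A : Finset α) :
    eCount E X Finset.univ = eCount E X A + eCount E X Aᶜ := by
  simp only [eCount_eq_sum]
  rw [← Finset.sum_add_distrib]
  refine Finset.sum_congr rfl fun x _ => ?_
  rw [← Finset.card_union_of_disjoint (Finset.disjoint_filter_filter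
    (disjoint_compl_right)), ← Finset.filter_union, Finset.union_compl]

lemma eCount_split_left (E : α → α → Prop) [DecidableRel E] (X A : Finset α) :
    eCount E Finset.univ X = eCount E A X + eCount E Aᶜ X := by
  simp only [eCount_eq_sum]
  rw [← Finset.sum_union (disjoint_compl_right), Finset.union_compl]

lemma eCount_balance (E : α → α → Prop) [DecidableRel E] (r : ℕ)
    (hout : ∀ v, (Finset.univ.filter fun w => E v w).card = r)
    (hin : ∀ v, (Finset.univ.filter fun w => E w v).card = r) (A : Finset α) :
    eCount E A Aᶜ = eCount E Aᶜ A := by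
  have h1 : ∀ X : Finset α, eCount E X Finset.univ = r * X.card := by
    intro X
    rw [eCount_eq_sum]
    simp [hout, mul_comm]
  have h2 : ∀ X : Finset α, eCount E Finset.univ X = r * X.card := by
    intro X
    rw [eCount_swap, eCount_eq_sum]
    simp [hin, mul_comm]
  have e1 := eCount_split_right E A A
  have e2 := eCount_split_left E A A
  rw [h1] at e1
  rw [h2] at e2
  omega

lemma eCount_tournament (E : α → α → Prop) [DecidableRel E]
    (htot : ∀ a b : α, a ≠ b → (E a b ↔ ¬ E b a)) (A : Finset α) :
    eCount E A Aᶜ + eCount E Aᶜ A = A.card * Aᶜ.card := by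
  rw [eCount_swap E Aᶜ A]
  unfold eCount
  have hrw : ((A ×ˢ Aᶜ).filter fun p => E p.2 p.1)
      = (A ×ˢ Aᶜ).filter fun p => ¬ E p.1 p.2 := by
    refine Finset.filter_congr ?_
    rintro ⟨a, b⟩ hab
    rw [Finset.mem_product] at hab
    have hne : a ≠ b := by
      rintro rfl
      exact (Finset.mem_compl.mp hab.2) hab.1
    simp only [not_iff_comm]
    rw [htot a b hne]
    tauto
  rw [hrw, Finset.card_filter_add_card_filter_not, Finset.card_product]

end Helpers2

/-- Rotational tournament on `Fin (2r+1)`. -/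
def T (r : ℕ) (a b : Fin (2 * r + 1)) : Prop :=
  1 ≤ (b - a).val ∧ (b - a).val ≤ r

instance (r : ℕ) : DecidableRel (T r) := fun _ _ => instDecidableAnd

lemma T_irrefl (r : ℕ) (a : Fin (2 * r + 1)) : ¬ T r a a := by
  simp [T, sub_self]

lemma Fin_val_sub_add (r : ℕ) {a b : Fin (2 * r + 1)} (h : a ≠ b) :
    (b - a).val + (a - b).val = 2 * r + 1 ∧ 1 ≤ (b - a).val := by
  have hne : b - a ≠ 0 := sub_ne_zero.mpr (Ne.symm h)
  have hv : (b - a).val ≠ 0 := by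
    intro h'; exact hne (Fin.ext (by rw [h', Fin.val_zero]))
  have hlt : (b - a).val < 2 * r + 1 := (b - a).is_lt
  have hab : a - b = -(b - a) := (neg_sub b a).symm
  have : (a - b).val = (2 * r + 1 - (b - a).val) % (2 * r + 1) := by
    rw [hab, Fin.coe_neg]
  rw [Nat.mod_eq_of_lt (by omega)] at this
  omega

lemma T_total (r : ℕ) {a b : Fin (2 * r + 1)} (h : a ≠ b) : T r a b ↔ ¬ T r b a := by
  obtain ⟨h1, h2⟩ := Fin_val_sub_add r h
  obtain ⟨h3, h4⟩ := Fin_val_sub_add r (Ne.symm h)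
  unfold T
  omega

lemma filter_val_card (r : ℕ) :
    ((Finset.univ : Finset (Fin (2 * r + 1))).filter
      fun u => 1 ≤ u.val ∧ u.val ≤ r).card = r := by
  rw [Finset.card_nbij (i := fun u : Fin (2 * r + 1) => u.val) (t := Finset.Icc 1 r)]
  · simp
  · intro u hu
    simp at hu ⊢
    omega
  · intro u hu v hv huv
    exact Fin.ext huv
  · intro x hx
    simp only [Finset.coe_Icc, Set.mem_Icc] at hx
    exact ⟨⟨x, by omega⟩,
      Finset.mem_coe.mpr (Finset.mem_filter.mpr ⟨Finset.mem_univ _, by simp only [Fin.val_mk]; omega⟩), rfl⟩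

lemma T_outdeg (r : ℕ) (v : Fin (2 * r + 1)) :
    ((Finset.univ : Finset (Fin (2 * r + 1))).filter fun w => T r v w).card = r := by
  refine Eq.trans ?_ (filter_val_card r)
  apply Finset.card_nbij' (fun w => w - v) (fun u => u + v)
  · intro w hw
    simp only [Finset.mem_coe, Finset.mem_filter, Finset.mem_univ, true_and] at hw ⊢
    exact hw
  · intro u hu
    simp only [Finset.mem_coe, Finset.mem_filter, Finset.mem_univ, true_and] at hu ⊢
    simpa [T] using hu
  · intro w _; simp
  · intro u _; simp

lemma T_indeg (r : ℕ) (v : Fin (2 * r + 1)) :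
    ((Finset.univ : Finset (Fin (2 * r + 1))).filter fun w => T r w v).card = r := by
  refine Eq.trans ?_ (filter_val_card r)
  apply Finset.card_nbij' (fun w => v - w) (fun u => v - u)
  · intro w hw
    simp only [Finset.mem_coe, Finset.mem_filter, Finset.mem_univ, true_and] at hw ⊢
    exact hw
  · intro u hu
    simp only [Finset.mem_coe, Finset.mem_filter, Finset.mem_univ, true_and] at hu ⊢
    simpa [T] using hu
  · intro w _; simp
  · intro u _; simp

lemma T_cut (r : ℕ) (A : Finset (Fin (2 * r + 1))) :
    2 * eCount (T r) A Aᶜ = A.card * (2 * r + 1 - A.card) := by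
  have hb := eCount_balance (T r) r (T_outdeg r) (T_indeg r) A
  have ht := eCount_tournament (T r) (fun a b h => T_total r h) A
  rw [Finset.card_compl] at ht
  simp only [Fintype.card_fin] at ht
  omega

lemma quad_bound (a r : ℕ) (h : a ≤ 2 * r + 1) : a * (2 * r + 1 - a) ≤ r * (r + 1) := by
  rcases le_or_gt a r with h' | h'
  · have hz : (0 : ℤ) ≤ ((r : ℤ) - a) * ((r : ℤ) + 1 - a) :=
      mul_nonneg (by omega) (by omega)
    zify [h]
    nlinarith [hz]
  · have hz : (0 : ℤ) ≤ ((a : ℤ) - r) * ((a : ℤ) - r - 1) :=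
      mul_nonneg (by omega) (by omega)
    zify [h]
    nlinarith [hz]

lemma pair_fiber {γ α : Type} [DecidableEq γ] [DecidableEq α] [Fintype α]
    (S : Finset (γ × α)) (i : γ) (p : α → Prop) [DecidablePred p] :
    (S.filter fun q => q.1 = i ∧ p q.2).card
      = ((Finset.univ.filter fun a => (i, a) ∈ S).filter p).card := by
  apply Finset.card_nbij' (fun q => q.2) (fun a => (i, a))
  · rintro ⟨j, a⟩ hq
    simp only [Finset.mem_coe, Finset.mem_filter] at hq ⊢
    obtain ⟨hS, rfl, hp⟩ := hq
    exact ⟨⟨Finset.mem_univ _, hS⟩, hp⟩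
  · intro a ha
    simp only [Finset.mem_coe, Finset.mem_filter, Finset.mem_univ, true_and] at ha ⊢
    exact ha
  · rintro ⟨j, a⟩ hq
    simp only [Finset.mem_coe, Finset.mem_filter] at hq
    obtain ⟨_, rfl, _⟩ := hq
    rfl
  · intro a _
    rfl

lemma filter_disjSum_card {β γ : Type} [DecidableEq β] [DecidableEq γ]
    (s : Finset β) (t : Finset γ) (p : β ⊕ γ → Prop) [DecidablePred p] :
    ((s.disjSum t).filter p).card
      = (s.filter fun b => p (Sum.inl b)).card + (t.filter fun c => p (Sum.inr c)).card := by
  have h : (s.disjSum t).filter p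
      = (s.filter fun b => p (Sum.inl b)).disjSum (t.filter fun c => p (Sum.inr c)) := by
    ext x
    cases x <;> simp
  rw [h, Finset.card_disjSum]

/-- The vertex type. -/
abbrev VT (d k : ℕ) : Type := (Fin k × Fin (2 * (d - 1) + 1)) ⊕ Fin (2 * d + 1)

/-- The edge relation. -/
def GE (d k : ℕ) : VT d k → VT d k → Prop := fun x y =>
  match x, y with
  | .inl p, .inl q => q.1 = p.1 ∧ T (d - 1) p.2 q.2
  | .inl _, .inr b => b = 0
  | .inr _, .inl _ => False
  | .inr a, .inr b => T d a b

instance (d k : ℕ) : DecidableRel (GE d k) := fun x y => by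
  rcases x with p | a <;> rcases y with q | b <;> simp only [GE] <;> infer_instance

lemma GE_irrefl (d k : ℕ) (v : VT d k) : ¬ GE d k v v := by
  rcases v with p | a
  · simp only [GE]
    rintro ⟨-, h⟩
    exact T_irrefl _ _ h
  · exact T_irrefl _ _

lemma GE_outdeg (d k : ℕ) (hd : 1 ≤ d) (v : VT d k) : outDeg (GE d k) v = d := by
  unfold outDeg
  rcases v with ⟨i, a⟩ | a
  · rw [← Finset.univ_disjSum_univ, filter_disjSum_card]
    simp only [GE]
    rw [pair_fiber]
    have h1 : ((Finset.univ : Finset (Fin (2 * (d-1) + 1))).filter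
        fun b => (i, b) ∈ (Finset.univ : Finset (Fin k × Fin (2 * (d-1) + 1)))) =
        Finset.univ := by
      simp
    rw [h1, T_outdeg]
    have h2 : ((Finset.univ : Finset (Fin (2 * d + 1))).filter fun c => c = 0).card = 1 := by
      rw [Finset.filter_eq']
      simp
    rw [h2]
    omega
  · rw [← Finset.univ_disjSum_univ, filter_disjSum_card]
    simp only [GE]
    erw [Finset.filter_false, Finset.card_empty, T_outdeg]
    omega

lemma GE_total (d k : ℕ) (hd : 1 ≤ d) :
    eCount (GE d k) Finset.univ Finset.univ = k * d * (2 * d - 1) + d * (2 * d + 1) := by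
  rw [eCount_eq_sum]
  have h : ∀ x ∈ (Finset.univ : Finset (VT d k)),
      ((Finset.univ.filter fun y => GE d k x y)).card = d := fun x _ => GE_outdeg d k hd x
  rw [Finset.sum_congr rfl h, Finset.sum_const, smul_eq_mul, Finset.card_univ]
  simp only [Fintype.card_sum, Fintype.card_prod, Fintype.card_fin]
  have h2 : 2 * d - 1 = 2 * (d - 1) + 1 := by omega
  rw [h2]
  ring

lemma GE_cut (d k : ℕ) (V1 : Finset (VT d k)) (h0 : Sum.inr 0 ∈ V1) :
    eCount (GE d k) V1 V1ᶜ
      = (∑ i : Fin k,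
          eCount (T (d - 1))
            (Finset.univ.filter fun a => Sum.inl (i, a) ∈ V1)
            (Finset.univ.filter fun a => Sum.inl (i, a) ∈ V1)ᶜ)
        + eCount (T d)
            (Finset.univ.filter fun b => Sum.inr b ∈ V1)
            (Finset.univ.filter fun b => Sum.inr b ∈ V1)ᶜ := by
  set A : Fin k → Finset (Fin (2 * (d - 1) + 1)) :=
    fun i => Finset.univ.filter fun a => Sum.inl (i, a) ∈ V1 with hA
  set B : Finset (Fin (2 * d + 1)) :=
    Finset.univ.filter fun b => Sum.inr b ∈ V1 with hB
  have hAc : ∀ i, (Finset.univ.filter fun a => (i, a) ∈ V1ᶜ.toLeft) = (A i)ᶜ := by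
    intro i
    ext a
    simp [hA]
  have hBc : V1ᶜ.toRight = Bᶜ := by
    ext b
    simp [hB]
  have hBe : V1.toRight = B := by
    ext b
    simp [hB]
  have key : ∀ f : VT d k → ℕ,
      ∑ x ∈ V1, f x
        = ∑ p ∈ V1.toLeft, f (.inl p) + ∑ b ∈ V1.toRight, f (.inr b) := by
    intro f
    conv_lhs => rw [← Finset.toLeft_disjSum_toRight (u := V1)]
    rw [Finset.sum_disjSum]
  have keyc : ∀ p : VT d k → Prop, ∀ inst : DecidablePred p,
      (V1ᶜ.filter p).card
        = (V1ᶜ.toLeft.filter fun q => p (.inl q)).card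
          + (V1ᶜ.toRight.filter fun b => p (.inr b)).card := by
    intro p inst
    conv_lhs => rw [← Finset.toLeft_disjSum_toRight (u := V1ᶜ)]
    rw [filter_disjSum_card]
  have hL : ∀ p : Fin k × Fin (2 * (d - 1) + 1),
      (V1ᶜ.filter fun y => GE d k (.inl p) y).card
        = ((A p.1)ᶜ.filter fun b => T (d - 1) p.2 b).card := by
    intro p
    rw [keyc _ _]
    have hz : (V1ᶜ.toRight.filter fun b => GE d k (.inl p) (.inr b)).card = 0 := by
      simp only [GE, hBc]
      rw [Finset.filter_eq']
      have : (0 : Fin (2 * d + 1)) ∉ Bᶜ := by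
        simp [hB, h0]
      simp [this]
    rw [hz, Nat.add_zero]
    simp only [GE]
    rw [pair_fiber, hAc]
  have hR : ∀ b : Fin (2 * d + 1),
      (V1ᶜ.filter fun y => GE d k (.inr b) y).card
        = (Bᶜ.filter fun c => T d b c).card := by
    intro b
    rw [keyc _ _]
    simp only [GE]
    erw [Finset.filter_false, Finset.card_empty, hBc, Nat.zero_add]
  rw [eCount_eq_sum, key]
  congr 1
  · -- left sums
    rw [Finset.sum_congr rfl fun p _ => hL p]
    rw [← Finset.sum_fiberwise V1.toLeft (fun p => p.1)
        (fun p => ((A p.1)ᶜ.filter fun b => T (d - 1) p.2 b).card)]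
    refine Finset.sum_congr rfl fun j _ => ?_
    rw [eCount_eq_sum]
    refine Finset.sum_nbij' (fun p => p.2) (fun b => (j, b)) ?_ ?_ ?_ ?_ ?_
    · rintro ⟨j', a⟩ hq
      simp only [Finset.mem_filter, Finset.mem_toLeft] at hq
      obtain ⟨h1, h2⟩ := hq
      subst h2
      simp [hA, h1]
    · intro b hb
      simp only [hA, Finset.mem_filter, Finset.mem_univ, true_and] at hb
      simp [Finset.mem_toLeft, hb]
    · rintro ⟨j', a⟩ hq
      simp only [Finset.mem_filter] at hq
      rw [hq.2]
    · intro b _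
      rfl
    · rintro ⟨j', a⟩ hq
      simp only [Finset.mem_filter] at hq
      rw [hq.2]
  · -- right sum
    rw [Finset.sum_congr rfl fun b _ => hR b, hBe, eCount_eq_sum]


/-- For every `d ≥ 2` and `k ≥ 1` there is a directed graph with minimum
outdegree `d` and `m = kd(2d-1) + d(2d+1)` edges containing a vertex `v₀` such
that every bipartition `V = V₁ ∪ V₂` with `v₀ ∈ V₁` satisfies
`e(V₁,V₂) ≤ (d-1)/(2(2d-1))·m + d²/(2d-1)`.  Hence `c_d ≤ (d-1)/(2(2d-1))`. -/
theorem stmt10 (d k : ℕ) (hd : 2 ≤ d) (hk : 1 ≤ k) :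
    ∃ (V : Type) (iF : Fintype V) (iD : DecidableEq V)
      (E : V → V → Prop) (iR : DecidableRel E),
      (∀ v, ¬ E v v) ∧
      (∀ v, d ≤ @outDeg V iF E iR v) ∧
      @eCount V iD E iR Finset.univ Finset.univ
        = k * d * (2 * d - 1) + d * (2 * d + 1) ∧
      ∃ v0 : V, ∀ V1 : Finset V, v0 ∈ V1 →
        (@eCount V iD E iR V1 V1ᶜ : ℝ)
          ≤ ((d : ℝ) - 1) / (2 * (2 * (d : ℝ) - 1))
              * (@eCount V iD E iR Finset.univ Finset.univ : ℝ)
            + (d : ℝ) ^ 2 / (2 * (d : ℝ) - 1) := by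
  have hd1 : 1 ≤ d := by omega
  refine ⟨VT d k, inferInstance, inferInstance, GE d k, inferInstance,
    GE_irrefl d k, fun v => (GE_outdeg d k hd1 v).ge, GE_total d k hd1, Sum.inr 0, ?_⟩
  intro V1 h0
  have hdec := GE_cut d k V1 h0
  have hbA : ∀ i : Fin k,
      2 * eCount (T (d - 1))
          (Finset.univ.filter fun a => Sum.inl (i, a) ∈ V1)
          (Finset.univ.filter fun a => Sum.inl (i, a) ∈ V1)ᶜ
        ≤ (d - 1) * d := by
    intro i
    rw [T_cut]
    have hc : (Finset.univ.filter fun a => Sum.inl (i, a) ∈ V1).card ≤ 2 * (d - 1) + 1 :=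
      le_trans (Finset.card_le_univ _) (by simp)
    have hq := quad_bound (Finset.univ.filter fun a => Sum.inl (i, a) ∈ V1).card (d - 1) hc
    exact le_trans hq (Nat.mul_le_mul_left _ (by omega))
  have hbB : 2 * eCount (T d)
        (Finset.univ.filter fun b => Sum.inr b ∈ V1)
        (Finset.univ.filter fun b => Sum.inr b ∈ V1)ᶜ
      ≤ d * (d + 1) := by
    rw [T_cut]
    have hc : (Finset.univ.filter fun b => Sum.inr b ∈ V1).card ≤ 2 * d + 1 :=
      le_trans (Finset.card_le_univ _) (by simp)
    exact quad_bound _ d hc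
  have h2c : 2 * eCount (GE d k) V1 V1ᶜ ≤ k * ((d - 1) * d) + d * (d + 1) := by
    rw [hdec, Nat.mul_add]
    refine Nat.add_le_add ?_ hbB
    rw [Finset.mul_sum]
    calc ∑ i : Fin k, 2 * eCount (T (d - 1))
            (Finset.univ.filter fun a => Sum.inl (i, a) ∈ V1)
            (Finset.univ.filter fun a => Sum.inl (i, a) ∈ V1)ᶜ
        ≤ ∑ _i : Fin k, (d - 1) * d := Finset.sum_le_sum fun i _ => hbA i
      _ = k * ((d - 1) * d) := by
          rw [Finset.sum_const, Finset.card_univ, Fintype.card_fin, smul_eq_mul]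
  -- real arithmetic
  rw [GE_total d k hd1]
  have hdr : (1 : ℝ) ≤ (d : ℝ) := by exact_mod_cast hd1
  have h2d : 2 * (d : ℝ) - 1 ≠ 0 := by nlinarith
  have hcast : ((k * d * (2 * d - 1) + d * (2 * d + 1) : ℕ) : ℝ)
      = k * d * (2 * (d : ℝ) - 1) + d * (2 * d + 1) := by
    have h1 : ((2 * d - 1 : ℕ) : ℝ) = 2 * (d : ℝ) - 1 := by
      rw [Nat.cast_sub (by omega : 1 ≤ 2 * d)]
      push_cast
      ring
    push_cast [h1]
    ring
  have hcc : (eCount (GE d k) V1 V1ᶜ : ℝ)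
      ≤ ((k : ℝ) * ((d : ℝ) - 1) * d + d * (d + 1)) / 2 := by
    have h2cr : (2 : ℝ) * (eCount (GE d k) V1 V1ᶜ : ℝ)
        ≤ (k : ℝ) * (((d : ℝ) - 1) * d) + d * (d + 1) := by
      have := h2c
      have hc2 : ((2 * eCount (GE d k) V1 V1ᶜ : ℕ) : ℝ)
          ≤ ((k * ((d - 1) * d) + d * (d + 1) : ℕ) : ℝ) := by exact_mod_cast this
      rw [Nat.cast_add, Nat.cast_mul, Nat.cast_mul, Nat.cast_mul,
        Nat.cast_sub hd1] at hc2
      push_cast at hc2 ⊢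
      linarith
    linarith
  have hrhs : ((d : ℝ) - 1) / (2 * (2 * (d : ℝ) - 1))
        * ((k : ℝ) * d * (2 * (d : ℝ) - 1) + d * (2 * d + 1))
        + (d : ℝ) ^ 2 / (2 * (d : ℝ) - 1)
      = ((k : ℝ) * ((d : ℝ) - 1) * d + d * (d + 1)) / 2 := by
    rw [div_mul_eq_mul_div, div_add_div _ _ (mul_ne_zero two_ne_zero h2d) h2d,
      div_eq_div_iff (mul_ne_zero (mul_ne_zero two_ne_zero h2d) h2d) two_ne_zero]
    ring
  rw [hcast, hrhs]
  exact hcc
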